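/- Let (C, W) be a category with weak equivalences and D any category. The assignment F ↦ L_W F together with the canonical transformations θ_F : L_W F ⟹ F defines a coidempotent functor on the full subcategory Cat'((C,W), D) of left derivable functors: θ_{L F} and L(θ_F) are isomorphisms (indeed identities up to canonical isomorphism), and L(θ_F) = θ_{L F}. -/

import Mathlib

open CategoryTheory

universe v u v' u' v2 u2

/-- If `L` is a localization functor for `W`, then any functor of the form `L ⋙ G`
has `G` itself (with the identity natural transformation) as a right Kan extension
along `L`, since whiskering by `L` is fully faithful. -/
lemma isRightKanExtension_id_of_isLocalization {C : Type u} [Category.{v} C]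
    {C' : Type u2} [Category.{v2} C'] {D : Type u'} [Category.{v'} D]
    (L : C ⥤ C') (W : MorphismProperty C) [L.IsLocalization W] (G : C' ⥤ D) :
    G.IsRightKanExtension (𝟙 (L ⋙ G)) := by
  haveI := Localization.full_whiskeringLeft L W D
  haveI := Localization.faithful_whiskeringLeft L W D
  constructor
  refine ⟨Limits.IsTerminal.ofUniqueHom (fun X => ?_) (fun X m => ?_)⟩
  · exact CostructuredArrow.homMk (((Functor.whiskeringLeft C C' D).obj L).preimage X.hom)
      (by exact (congrArg (fun f => f ≫ 𝟙 (L ⋙ G)) (((Functor.whiskeringLeft C C' D).obj L).map_preimage X.hom)).trans (Category.comp_id _))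
  · have hm : ((Functor.whiskeringLeft C C' D).obj L).map m.left = X.hom := by
      have hw := m.w; exact (Category.comp_id _).symm.trans (hw.trans (Category.comp_id _))
    ext1
    exact ((Functor.whiskeringLeft C C' D).obj L).map_injective (hm.trans (((Functor.whiskeringLeft C C' D).obj L).map_preimage X.hom).symm)

/-- Coidempotency of the left derived functor construction on left derivable functors.
Let `F : C ⥤ D` be left derivable, witnessed by a right Kan extension `(RF, θ)` of `F`
along the localisation functor `γ = W.Q`, so that `L F = γ ⋙ RF` and `θ_F = θ`.
Let `(RLF, θ')` be any right Kan extension of `L F = γ ⋙ RF` along `γ`, so that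
`L (L F) = γ ⋙ RLF` and `θ_{L F} = θ'`.  Then `θ_{L F}` is an isomorphism, and
`L (θ_F)` — the transformation `L (L F) ⟶ L F` obtained by whiskering with `γ` the
morphism of Kan extensions induced by `θ' ≫ θ` — equals `θ_{L F}`; in particular
`L (θ_F)` is an isomorphism as well.  Hence `(L, θ)` is a coidempotent functor on the
category of left derivable functors. -/
theorem derived_coidempotent {C : Type u} [Category.{v} C] {D : Type u'} [Category.{v'} D]
    (W : MorphismProperty C) (F : C ⥤ D)
    (RF : W.Localization ⥤ D) (θ : W.Q ⋙ RF ⟶ F) [RF.IsRightKanExtension θ]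
    (RLF : W.Localization ⥤ D) (θ' : W.Q ⋙ RLF ⟶ W.Q ⋙ RF)
    [RLF.IsRightKanExtension θ'] :
    IsIso θ' ∧
    Functor.whiskerLeft W.Q (RF.liftOfIsRightKanExtension θ RLF (θ' ≫ θ)) = θ' := by
  haveI := Localization.full_whiskeringLeft W.Q W D
  -- the comparison map `β₀ : RLF ⟶ RF` with `whiskerLeft W.Q β₀ = θ'`
  set β₀ : RLF ⟶ RF := ((Functor.whiskeringLeft C W.Localization D).obj W.Q).preimage θ' with hβ₀def
  have hβ₀ : Functor.whiskerLeft W.Q β₀ = θ' :=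
    ((Functor.whiskeringLeft C W.Localization D).obj W.Q).map_preimage θ'
  -- `(RF, 𝟙)` is a right Kan extension of `W.Q ⋙ RF` along `W.Q`
  have hid : RF.IsRightKanExtension (𝟙 (W.Q ⋙ RF)) :=
    isRightKanExtension_id_of_isLocalization W.Q W RF
  -- hence `β₀` is an isomorphism
  have hiso : IsIso β₀ := by
    rw [← Functor.isRightKanExtension_iff_isIso β₀ (𝟙 (W.Q ⋙ RF)) θ'
      (by rw [Category.comp_id, hβ₀])]
    infer_instance
  constructor
  · rw [← hβ₀]
    infer_instance
  · have : RF.liftOfIsRightKanExtension θ RLF (θ' ≫ θ) = β₀ :=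
      RF.hom_ext_of_isRightKanExtension θ _ _ (by rw [hβ₀]; simp)
    rw [this, hβ₀]
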